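/- Let {|ψ_x^{(θ)}⟩ : x = 1,...,d} for θ = 1,...,d+1 be a complete set of d+1 mutually unbiased orthonormal bases of a d-dimensional Hilbert space H (meaning |⟨ψ_x^{(θ)}|ψ_y^{(θ')}⟩|² = 1/d whenever θ ≠ θ'). Then ∑_{θ=1}^{d+1} ∑_{x=1}^{d} |ψ_x^{(θ)}⟩⟨ψ_x^{(θ)}| ⊗ |ψ_x^{(θ)}⟩⟨ψ_x^{(θ)}| = I + F_swap, where I is the identity on H ⊗ H and F_swap is the swap operator. -/

import Mathlib

open Matrix Kronecker BigOperators Complex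

noncomputable section

/-- The swap operator on `ℂ^d ⊗ ℂ^d`, as a matrix: `F(u ⊗ v) = v ⊗ u`. -/
def swapM (d : ℕ) : Matrix (Fin d × Fin d) (Fin d × Fin d) ℂ :=
  fun p q => if p.1 = q.2 ∧ p.2 = q.1 then 1 else 0

/-- Rank-one projector `|ψ⟩⟨ψ|` as a matrix. -/
def proj {d : ℕ} (ψ : Fin d → ℂ) : Matrix (Fin d) (Fin d) ℂ :=
  Matrix.vecMulVec ψ (star ψ)


lemma trace_proj {d : ℕ} (a : Fin d → ℂ) :
    Matrix.trace (proj a) = ∑ s, (starRingEnd ℂ) (a s) * a s := by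
  simp [Matrix.trace, Matrix.diag, proj, Matrix.vecMulVec_apply, Complex.star_def, mul_comm]

lemma trace_proj_mul {d : ℕ} (a b : Fin d → ℂ) :
    Matrix.trace (proj a * proj b)
      = (∑ s, (starRingEnd ℂ) (a s) * b s) * (∑ s, (starRingEnd ℂ) (b s) * a s) := by
  simp only [Matrix.trace, Matrix.diag, Matrix.mul_apply, proj, Matrix.vecMulVec_apply,
    Pi.star_apply, Complex.star_def]
  rw [Finset.sum_mul_sum, Finset.sum_comm]
  apply Finset.sum_congr rfl; intro i _
  apply Finset.sum_congr rfl; intro k _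
  ring

lemma trace_swap {d : ℕ} : Matrix.trace (swapM d) = (d : ℂ) := by
  have h1 : Matrix.trace (swapM d) = ∑ i : Fin d, ∑ j : Fin d,
      if i = j ∧ j = i then (1:ℂ) else 0 := by
    rw [Matrix.trace, Fintype.sum_prod_type]; rfl
  have h2 : ∀ i j : Fin d, (if i = j ∧ j = i then (1:ℂ) else 0) = if i = j then 1 else 0 := by
    intro i j; by_cases h : i = j <;> simp [h]
  rw [h1]
  simp [h2, Finset.sum_ite_eq]

lemma swap_mul_swap {d : ℕ} : swapM d * swapM d = (1 : Matrix (Fin d × Fin d) (Fin d × Fin d) ℂ) := by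
  ext p q
  simp [Matrix.mul_apply, swapM, Fintype.sum_prod_type, ite_and, Matrix.one_apply,
    Prod.ext_iff, eq_comm]

lemma trace_kron_swap {d : ℕ} (A B : Matrix (Fin d) (Fin d) ℂ) :
    Matrix.trace (A ⊗ₖ B * swapM d) = Matrix.trace (A * B) := by
  simp [Matrix.trace, Matrix.diag, Matrix.mul_apply, swapM, Fintype.sum_prod_type,
    Matrix.kroneckerMap_apply, mul_ite, ite_and]

lemma kron_proj_herm {d : ℕ} (a : Fin d → ℂ) :
    (proj a ⊗ₖ proj a)ᴴ = proj a ⊗ₖ proj a := by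
  ext p q
  simp only [Matrix.conjTranspose_apply, Matrix.kroneckerMap_apply, proj,
    Matrix.vecMulVec_apply, Pi.star_apply, Complex.star_def]
  simp only [_root_.map_mul, Complex.conj_conj]
  ring

lemma swap_herm {d : ℕ} : (swapM d)ᴴ = swapM d := by
  ext p q
  rw [Matrix.conjTranspose_apply]
  have : (q.1 = p.2 ∧ q.2 = p.1) ↔ (p.1 = q.2 ∧ p.2 = q.1) := by
    constructor <;> rintro ⟨h1, h2⟩ <;> exact ⟨h2.symm, h1.symm⟩
  simp [swapM, this, apply_ite]

lemma sum_ite_const {d : ℕ} (θ : Fin (d+1)) (a b : ℂ) :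
    (∑ θ' : Fin (d+1), if θ = θ' then a else b) = a + d * b := by
  have h : ∀ θ' : Fin (d+1), (if θ = θ' then a else b)
      = b + (if θ = θ' then a - b else 0) := by
    intro θ'; split <;> ring
  simp_rw [h]
  rw [Finset.sum_add_distrib, Finset.sum_const, Finset.sum_ite_eq]
  simp [Finset.card_univ]
  ring



theorem stmt2 (d : ℕ) (hd : 1 ≤ d)
    (ψ : Fin (d + 1) → Fin d → Fin d → ℂ)
    (hOrth : ∀ θ x y, (∑ s, (starRingEnd ℂ) (ψ θ x s) * ψ θ y s) = if x = y then 1 else 0)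
    (hMUB : ∀ θ θ', θ ≠ θ' → ∀ x y,
      (‖∑ s, (starRingEnd ℂ) (ψ θ x s) * ψ θ' y s‖) ^ 2 = 1 / (d : ℝ)) :
    ∑ θ : Fin (d + 1), ∑ x : Fin d, (proj (ψ θ x)) ⊗ₖ (proj (ψ θ x)) =
      (1 : Matrix (Fin d × Fin d) (Fin d × Fin d) ℂ) + swapM d := by
  classical
  have hdC : (d : ℂ) ≠ 0 := Nat.cast_ne_zero.mpr (by omega)
  set T : Matrix (Fin d × Fin d) (Fin d × Fin d) ℂ := 1 + swapM d with hT
  set S : Matrix (Fin d × Fin d) (Fin d × Fin d) ℂ :=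
    ∑ θ : Fin (d+1), ∑ x : Fin d, proj (ψ θ x) ⊗ₖ proj (ψ θ x) with hS
  -- trace of pairwise products of projectors
  have hcc : ∀ θ x θ' y, Matrix.trace (proj (ψ θ x) * proj (ψ θ' y))
      = if θ = θ' then (if x = y then (1:ℂ) else 0) else 1 / (d:ℂ) := by
    intro θ x θ' y
    rw [trace_proj_mul]
    by_cases h : θ = θ'
    · subst h
      rw [hOrth, hOrth]
      by_cases hxy : x = y
      · subst hxy; simp
      · simp [hxy, Ne.symm hxy]
    · rw [if_neg h]
      have h2 : (∑ s, (starRingEnd ℂ) (ψ θ' y s) * ψ θ x s)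
          = (starRingEnd ℂ) (∑ s, (starRingEnd ℂ) (ψ θ x s) * ψ θ' y s) := by
        rw [map_sum]
        apply Finset.sum_congr rfl; intro s _
        rw [_root_.map_mul, Complex.conj_conj, mul_comm]
      rw [h2, Complex.mul_conj, ← Complex.sq_norm, hMUB θ θ' h x y]
      push_cast
      ring
  -- trace S
  have hStr : Matrix.trace S = (d:ℂ) * (d + 1) := by
    rw [hS]
    simp only [Matrix.trace_sum, Matrix.trace_kronecker]
    have : ∀ θ x, Matrix.trace (proj (ψ θ x)) * Matrix.trace (proj (ψ θ x)) = 1 := by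
      intro θ x
      rw [trace_proj]
      rw [hOrth]
      simp
    calc ∑ θ : Fin (d+1), ∑ x : Fin d,
          Matrix.trace (proj (ψ θ x)) * Matrix.trace (proj (ψ θ x))
        = ∑ θ : Fin (d+1), ∑ x : Fin d, (1:ℂ) := by
          exact Finset.sum_congr rfl fun θ _ => Finset.sum_congr rfl fun x _ => this θ x
      _ = (d:ℂ) * (d + 1) := by simp; ring
  -- trace (S * swapM d)
  have hSF : Matrix.trace (S * swapM d) = (d:ℂ) * (d + 1) := by
    rw [hS]
    simp only [Matrix.sum_mul, Matrix.trace_sum]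
    calc ∑ θ : Fin (d+1), ∑ x : Fin d,
          Matrix.trace ((proj (ψ θ x) ⊗ₖ proj (ψ θ x)) * swapM d)
        = ∑ θ : Fin (d+1), ∑ x : Fin d, (1:ℂ) := by
          apply Finset.sum_congr rfl; intro θ _
          apply Finset.sum_congr rfl; intro x _
          rw [trace_kron_swap, hcc]
          simp
      _ = (d:ℂ) * (d + 1) := by simp; ring
  -- trace (S * T)
  have hST : Matrix.trace (S * T) = 2 * (d:ℂ) * (d + 1) := by
    rw [hT, mul_add, mul_one, Matrix.trace_add, hStr, hSF]; ring
  have hTS : Matrix.trace (T * S) = 2 * (d:ℂ) * (d + 1) := by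
    rw [Matrix.trace_mul_comm, hST]
  -- trace (T * T)
  have hTT : Matrix.trace (T * T) = 2 * (d:ℂ) * (d + 1) := by
    rw [hT, add_mul, mul_add, mul_add, one_mul, mul_one, swap_mul_swap,
      Matrix.trace_add, Matrix.trace_add, Matrix.trace_add,
      Matrix.trace_one, trace_swap]
    simp [Fintype.card_prod, trace_swap]
    ring
  -- trace (S * S)
  have hSS : Matrix.trace (S * S) = 2 * (d:ℂ) * (d + 1) := by
    have expand : Matrix.trace (S * S)
        = ∑ θ : Fin (d+1), ∑ x : Fin d, ∑ θ' : Fin (d+1), ∑ y : Fin d,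
            Matrix.trace (proj (ψ θ x) * proj (ψ θ' y))
              * Matrix.trace (proj (ψ θ x) * proj (ψ θ' y)) := by
      rw [hS, Matrix.sum_mul, Matrix.trace_sum]
      apply Finset.sum_congr rfl; intro θ _
      rw [Matrix.sum_mul, Matrix.trace_sum]
      apply Finset.sum_congr rfl; intro x _
      rw [Matrix.mul_sum, Matrix.trace_sum]
      apply Finset.sum_congr rfl; intro θ' _
      rw [Matrix.mul_sum, Matrix.trace_sum]
      apply Finset.sum_congr rfl; intro y _
      rw [← Matrix.mul_kronecker_mul, Matrix.trace_kronecker]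
    rw [expand]
    have h1 : ∀ θ x, (∑ θ' : Fin (d+1), ∑ y : Fin d,
        Matrix.trace (proj (ψ θ x) * proj (ψ θ' y))
          * Matrix.trace (proj (ψ θ x) * proj (ψ θ' y))) = 2 := by
      intro θ x
      have hterm : ∀ θ' y, Matrix.trace (proj (ψ θ x) * proj (ψ θ' y))
            * Matrix.trace (proj (ψ θ x) * proj (ψ θ' y))
          = if θ = θ' then (if x = y then (1:ℂ) else 0) else 1 / ((d:ℂ) * d) := by
        intro θ' y
        rw [hcc]
        by_cases h : θ = θ'
        · subst h; simp only [if_pos rfl]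
          by_cases hxy : x = y <;> simp [hxy]
        · simp only [if_neg h]
          rw [div_mul_div_comm, one_mul]
      simp_rw [hterm]
      have h2 : ∀ θ' : Fin (d+1), (∑ y : Fin d,
          if θ = θ' then (if x = y then (1:ℂ) else 0) else 1 / ((d:ℂ) * d))
          = if θ = θ' then 1 else (d:ℂ) * (1 / ((d:ℂ) * d)) := by
        intro θ'
        by_cases h : θ = θ'
        · simp [h, Finset.sum_ite_eq]
        · simp [h, Finset.sum_const, Finset.card_univ, mul_comm]
      simp_rw [h2]
      rw [sum_ite_const]
      field_simp
      ring
    calc ∑ θ : Fin (d+1), ∑ x : Fin d, (∑ θ' : Fin (d+1), ∑ y : Fin d,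
          Matrix.trace (proj (ψ θ x) * proj (ψ θ' y))
            * Matrix.trace (proj (ψ θ x) * proj (ψ θ' y)))
        = ∑ θ : Fin (d+1), ∑ x : Fin d, (2:ℂ) := by
          exact Finset.sum_congr rfl fun θ _ => Finset.sum_congr rfl fun x _ => h1 θ x
      _ = 2 * (d:ℂ) * (d + 1) := by simp; ring
  -- the difference
  set M : Matrix (Fin d × Fin d) (Fin d × Fin d) ℂ := S - T with hM
  have hMM : Matrix.trace (M * M) = 0 := by
    rw [hM, sub_mul, mul_sub, mul_sub, Matrix.trace_sub, Matrix.trace_sub, Matrix.trace_sub,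
      hSS, hST, hTS, hTT]
    ring
  have hMH : Mᴴ = M := by
    rw [hM, Matrix.conjTranspose_sub, hT, Matrix.conjTranspose_add,
      Matrix.conjTranspose_one, swap_herm, hS]
    congr 1
    simp only [Matrix.conjTranspose_sum, kron_proj_herm]
  have hMzero : M = 0 := by
    have ht : Matrix.trace (Mᴴ * M) = 0 := by rw [hMH]; exact hMM
    have h2 : Matrix.trace (Mᴴ * M)
        = ((∑ p : Fin d × Fin d, ∑ q : Fin d × Fin d, Complex.normSq (M q p) : ℝ) : ℂ) := by
      rw [Matrix.trace]
      push_cast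
      apply Finset.sum_congr rfl; intro p _
      rw [Matrix.diag_apply, Matrix.mul_apply]
      apply Finset.sum_congr rfl; intro q _
      rw [Matrix.conjTranspose_apply, Complex.star_def, mul_comm, Complex.mul_conj]
    have h3 : (∑ p : Fin d × Fin d, ∑ q : Fin d × Fin d, Complex.normSq (M q p)) = 0 := by
      have := ht
      rw [h2] at this
      exact_mod_cast this
    have h4 := (Finset.sum_eq_zero_iff_of_nonneg
      (fun p _ => Finset.sum_nonneg fun q _ => Complex.normSq_nonneg _)).mp h3
    ext q p
    have h5 := (Finset.sum_eq_zero_iff_of_nonneg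
      (fun q _ => Complex.normSq_nonneg _)).mp (h4 p (Finset.mem_univ p)) q (Finset.mem_univ q)
    simpa using Complex.normSq_eq_zero.mp h5
  have := sub_eq_zero.mp (hM ▸ hMzero)
  exact this
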